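/- Let G and H be finite simple graphs with G connected, and let G⊙H be their corona product with copies H_1, …, H_{n(G)} of H attached to the vertices v_1, …, v_{n(G)} of G. Then every distance-equalizer set S of G⊙H satisfies S ∩ ({v_i} ∪ V(H_i)) ≠ ∅ for every i ∈ {1, …, n(G)}; consequently, ξ(G⊙H) ≥ n(G). -/

import Mathlib

universe u v

variable {V : Type u} {W : Type v}

/-- A distance-equalizer set of a graph: for every pair of distinct vertices outside `S`
there is a vertex of `S` equidistant to both. -/
def IsDistEqSet {α : Type*} (G : SimpleGraph α) (S : Set α) : Prop :=
  ∀ ⦃x y : α⦄, x ∉ S → y ∉ S → x ≠ y → ∃ w ∈ S, G.dist w x = G.dist w y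

/-- The equidistant dimension of a graph: the minimum cardinality of a distance-equalizer set. -/
noncomputable def eqdim {α : Type*} (G : SimpleGraph α) : ℕ :=
  sInf {n | ∃ S : Set α, IsDistEqSet G S ∧ S.ncard = n}

/-- The bisector of two vertices: vertices equidistant to both. -/
def bisector {α : Type*} (G : SimpleGraph α) (x y : α) : Set α :=
  {w | G.dist w x = G.dist w y}

/-- The empty bisector graph of `G`: two distinct vertices are adjacent iff their bisector
in `G` is empty. -/
def emptyBisector {α : Type*} (G : SimpleGraph α) : SimpleGraph α where
  Adj x y := x ≠ y ∧ bisector G x y = ∅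
  symm := ⟨by
    rintro x y ⟨h1, h2⟩
    refine ⟨h1.symm, Set.eq_empty_iff_forall_notMem.mpr fun w hw => ?_⟩
    exact Set.eq_empty_iff_forall_notMem.mp h2 w
      ((show G.dist w y = G.dist w x from hw).symm)⟩
  loopless := ⟨fun _ h => h.1 rfl⟩

/-- A vertex cover of a graph: a set of vertices meeting every edge. -/
def IsVertexCover {α : Type*} (G : SimpleGraph α) (C : Set α) : Prop :=
  ∀ ⦃x y : α⦄, G.Adj x y → x ∈ C ∨ y ∈ C

/-- An independent set of a graph: a set of pairwise non-adjacent vertices. -/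
def IsIndepSet {α : Type*} (G : SimpleGraph α) (A : Set α) : Prop :=
  ∀ ⦃x y : α⦄, x ∈ A → y ∈ A → ¬ G.Adj x y

/-- The vertex cover number `β(G)`. -/
noncomputable def vcNum {α : Type*} (G : SimpleGraph α) : ℕ :=
  sInf {n | ∃ C : Set α, IsVertexCover G C ∧ C.ncard = n}

/-- The independence number `α(G)`. -/
noncomputable def indepNum {α : Type*} (G : SimpleGraph α) : ℕ :=
  sSup {n | ∃ A : Set α, IsIndepSet G A ∧ A.ncard = n}

/-- A forward-equalized pair `(X, Y)` of `G`: `X ∪ Y = V(G)` and for every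
`a ∈ X \ Y` and `b ∈ Y \ X` there is `w` with `d(w,a) = d(w,b) + 1`. -/
def IsForwardEqualizedPair {α : Type*} (G : SimpleGraph α) (X Y : Set α) : Prop :=
  X ∪ Y = Set.univ ∧
  ∀ ⦃a⦄, a ∈ X \ Y → ∀ ⦃b⦄, b ∈ Y \ X → ∃ w, G.dist w a = G.dist w b + 1

/-- `β*(G)`: the minimum of `|X ∩ Y|` over all pairs of vertex covers `X, Y` of the
empty bisector graph of `G` such that `(X, Y)` is a forward-equalized pair of `G`. -/
noncomputable def betaStar {α : Type*} (G : SimpleGraph α) : ℕ :=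
  sInf {n | ∃ X Y : Set α,
    IsVertexCover (emptyBisector G) X ∧ IsVertexCover (emptyBisector G) Y ∧
    IsForwardEqualizedPair G X Y ∧ (X ∩ Y).ncard = n}

/-- The corona product `G ⊙ H`: one copy of `H` for each vertex `i` of `G` (the vertices
`Sum.inr (i, w)`), with `i` joined to every vertex of its copy. -/
def corona (G : SimpleGraph V) (H : SimpleGraph W) : SimpleGraph (V ⊕ V × W) where
  Adj x y :=
    match x, y with
    | Sum.inl a, Sum.inl b => G.Adj a b
    | Sum.inl a, Sum.inr p => a = p.1
    | Sum.inr p, Sum.inl a => a = p.1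
    | Sum.inr p, Sum.inr q => p.1 = q.1 ∧ H.Adj p.2 q.2
  symm := ⟨by
    rintro (a | p) (b | q) h
    · exact h.symm
    · exact h
    · exact h
    · exact ⟨h.1.symm, h.2.symm⟩⟩
  loopless := ⟨by
    rintro (a | p) h
    · exact G.ne_of_adj h rfl
    · exact H.ne_of_adj h.2 rfl⟩

lemma corona_support {G : SimpleGraph V} {H : SimpleGraph W} {i : V} {w : W} :
    ∀ {x y : V ⊕ V × W} (p : (corona G H).Walk x y), y = Sum.inr (i, w) →
      Sum.inl i ∈ p.support ∨ ∃ w', x = Sum.inr (i, w') := by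
  intro x y p
  induction p with
  | nil => rintro rfl; exact Or.inr ⟨w, rfl⟩
  | @cons x y _ h q ih =>
    intro hy
    have ih := ih hy
    rcases ih with hm | ⟨w', rfl⟩
    · exact Or.inl (by rw [SimpleGraph.Walk.support_cons]; exact List.mem_cons_of_mem _ hm)
    · cases x with
      | inl a => exact Or.inl (by simp [SimpleGraph.Walk.support_cons, show a = i from h])
      | inr pr =>
        obtain ⟨p1, p2⟩ := pr
        obtain ⟨rfl, -⟩ : p1 = i ∧ H.Adj p2 w' := h
        exact Or.inr ⟨p2, rfl⟩

lemma corona_connected {G : SimpleGraph V} {H : SimpleGraph W} (hG : G.Connected) :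
    (corona G H).Connected := by
  have hne : Nonempty V := hG.nonempty
  have hinl : ∀ a b : V, (corona G H).Reachable (Sum.inl a) (Sum.inl b) := by
    intro a b
    exact SimpleGraph.Reachable.map ⟨Sum.inl, fun {u v} h => h⟩ (hG.preconnected a b)
  have hcopy : ∀ (p : V × W), (corona G H).Reachable (Sum.inl p.1) (Sum.inr p) :=
    fun p => (show (corona G H).Adj (Sum.inl p.1) (Sum.inr p) from rfl).reachable
  constructor
  rintro (a | p) (b | q)
  · exact hinl a b
  · exact (hinl a q.1).trans (hcopy q)
  · exact ((hinl p.1 b).symm.trans (hcopy p)).symm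
  · exact ((hcopy p).symm.trans (hinl p.1 q.1)).trans (hcopy q)

lemma corona_dist_lt {G : SimpleGraph V} {H : SimpleGraph W} (hG : G.Connected)
    {s : V ⊕ V × W} {i : V} (hs1 : s ≠ Sum.inl i) (hs2 : ∀ w', s ≠ Sum.inr (i, w'))
    (w : W) :
    (corona G H).dist s (Sum.inl i) + 1 ≤ (corona G H).dist s (Sum.inr (i, w)) := by
  classical
  obtain ⟨p, hp⟩ := ((corona_connected (H := H) hG).preconnected s (Sum.inr (i, w))).exists_walk_length_eq_dist
  rcases corona_support p rfl with hm | ⟨w', hw'⟩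
  · have hsplit := p.take_spec hm
    have hlen : (p.takeUntil _ hm).length + (p.dropUntil _ hm).length = p.length := by
      rw [← SimpleGraph.Walk.length_append, hsplit]
    have h1 : (corona G H).dist s (Sum.inl i) ≤ (p.takeUntil _ hm).length :=
      SimpleGraph.dist_le _
    have h2 : 1 ≤ (p.dropUntil _ hm).length := by
      rcases Nat.eq_zero_or_pos (p.dropUntil _ hm).length with h0 | h0
      · exact absurd ((p.dropUntil _ hm).eq_of_length_eq_zero h0) (by simp)
      · exact h0
    omega
  · exact absurd hw' (hs2 w')


/-- For connected `G`, every distance-equalizer set `S` of the corona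
product `G ⊙ H` meets `{vᵢ} ∪ V(Hᵢ)` for every vertex `i` of `G`; consequently
`ξ(G ⊙ H) ≥ n(G)`. -/
theorem corona_distEqSet_meets_copies [Fintype V] [Fintype W] [Nonempty W]
    (G : SimpleGraph V) (H : SimpleGraph W) (hG : G.Connected) :
    (∀ S : Set (V ⊕ V × W), IsDistEqSet (corona G H) S →
      ∀ i : V,
        (S ∩ ({Sum.inl i} ∪ {x : V ⊕ V × W | ∃ w : W, x = Sum.inr (i, w)})).Nonempty) ∧
    Fintype.card V ≤ eqdim (corona G H) := by
  classical
  have hmeet : ∀ S : Set (V ⊕ V × W), IsDistEqSet (corona G H) S →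
      ∀ i : V,
        (S ∩ ({Sum.inl i} ∪ {x : V ⊕ V × W | ∃ w : W, x = Sum.inr (i, w)})).Nonempty := by
    intro S hS i
    by_contra hemp
    rw [Set.not_nonempty_iff_eq_empty] at hemp
    have hdisj : ∀ s ∈ S, s ≠ Sum.inl i ∧ ∀ w', s ≠ Sum.inr (i, w') := by
      intro s hs
      constructor
      · rintro rfl
        exact Set.eq_empty_iff_forall_notMem.mp hemp _ ⟨hs, Or.inl rfl⟩
      · rintro w' rfl
        exact Set.eq_empty_iff_forall_notMem.mp hemp _ ⟨hs, Or.inr ⟨w', rfl⟩⟩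
    obtain ⟨w0⟩ := ‹Nonempty W›
    have hx : Sum.inl i ∉ S := fun h => (hdisj _ h).1 rfl
    have hy : Sum.inr (i, w0) ∉ S := fun h => (hdisj _ h).2 w0 rfl
    obtain ⟨s, hsS, hd⟩ := hS hx hy (by simp)
    have hlt := corona_dist_lt (H := H) hG (hdisj s hsS).1 (hdisj s hsS).2 w0
    omega
  refine ⟨hmeet, ?_⟩
  have hne : {n | ∃ S : Set (V ⊕ V × W), IsDistEqSet (corona G H) S ∧ S.ncard = n}.Nonempty :=
    ⟨(Set.univ : Set (V ⊕ V × W)).ncard, Set.univ,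
      fun x _ hx => absurd (Set.mem_univ x) hx, rfl⟩
  refine le_csInf hne ?_
  rintro n ⟨S, hS, rfl⟩
  choose f hf using fun i => hmeet S hS i
  have hinj : Function.Injective (fun i => (⟨f i, (hf i).1⟩ : S)) := by
    intro i j hij
    have h1 := (hf i).2
    have h2 := (hf j).2
    have heq : f i = f j := congrArg Subtype.val hij
    rw [heq] at h1
    rcases h1 with h1 | ⟨w1, h1⟩ <;> rcases h2 with h2 | ⟨w2, h2⟩
    · exact Sum.inl.inj ((show f j = Sum.inl i from h1).symm.trans
        (show f j = Sum.inl j from h2))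
    · exact absurd ((show f j = Sum.inl i from h1).symm.trans h2) (by simp)
    · exact absurd (h1.symm.trans (show f j = Sum.inl j from h2)) (by simp)
    · exact ((Prod.mk.injEq _ _ _ _).mp (Sum.inr.inj (h1.symm.trans h2))).1
  calc Fintype.card V = Nat.card V := (Nat.card_eq_fintype_card).symm
    _ ≤ Nat.card S := Nat.card_le_card_of_injective _ hinj
    _ = S.ncard := (Nat.card_coe_set_eq S)
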